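/- arXiv:1503.02870 — 2 statements merged into one kernel-verified Lean document; each statement's English description precedes it below -/
import Mathlib

section
/- Let a, b ∈ R^3 be unit vectors and α > 0. Define the 9×9 block matrix A = [[-αI, 0, [a]_×], [0, -αI, [b]_×], [[a]_×, [b]_×, 0]]. Then the operator norm of A is at most max(√(2+2α²), √(3+α²)). -/
noncomputable section

/-- The skew-symmetric cross-product matrix of `x ∈ ℝ³`. -/
def crossMat (x : EuclideanSpace ℝ (Fin 3)) : Matrix (Fin 3) (Fin 3) ℝ :=
  !![0, -x 2, x 1; x 2, 0, -x 0; -x 1, x 0, 0]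

/-- The cross product on `ℝ³` (Euclidean space). -/
def cross (x y : EuclideanSpace ℝ (Fin 3)) : EuclideanSpace ℝ (Fin 3) :=
  WithLp.toLp 2 ![x 1 * y 2 - x 2 * y 1, x 2 * y 0 - x 0 * y 2, x 0 * y 1 - x 1 * y 0]

/-- The 9×9 block matrix of the observer error LTV dynamics. -/
def AMat (α : ℝ) (a b : EuclideanSpace ℝ (Fin 3)) :
    Matrix (Fin 3 ⊕ (Fin 3 ⊕ Fin 3)) (Fin 3 ⊕ (Fin 3 ⊕ Fin 3)) ℝ :=
  Matrix.fromBlocks (-α • 1) (Matrix.fromCols 0 (crossMat a))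
    (Matrix.fromRows 0 (crossMat a))
    (Matrix.fromBlocks (-α • 1) (crossMat b) (crossMat b) 0)

lemma esq (y : EuclideanSpace ℝ (Fin 3)) : ‖y‖ ^ 2 = y 0 ^ 2 + y 1 ^ 2 + y 2 ^ 2 := by
  rw [EuclideanSpace.norm_eq, Real.sq_sqrt (by positivity)]
  simp [Fin.sum_univ_three, sq_abs]

lemma esq9 (y : EuclideanSpace ℝ (Fin 3 ⊕ (Fin 3 ⊕ Fin 3))) :
    ‖y‖ ^ 2 = (y (Sum.inl 0) ^ 2 + y (Sum.inl 1) ^ 2 + y (Sum.inl 2) ^ 2)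
      + (y (Sum.inr (Sum.inl 0)) ^ 2 + y (Sum.inr (Sum.inl 1)) ^ 2 + y (Sum.inr (Sum.inl 2)) ^ 2)
      + (y (Sum.inr (Sum.inr 0)) ^ 2 + y (Sum.inr (Sum.inr 1)) ^ 2 + y (Sum.inr (Sum.inr 2)) ^ 2) := by
  rw [EuclideanSpace.norm_eq, Real.sq_sqrt (by positivity)]
  simp [Fintype.sum_sum_type, Fin.sum_univ_three, sq_abs]
  ring

lemma cross_norm_le (a w : EuclideanSpace ℝ (Fin 3)) (ha : ‖a‖ = 1) : ‖cross a w‖ ≤ ‖w‖ := by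
  have h3 : ‖a‖ ^ 2 = 1 := by rw [ha]; norm_num
  rw [esq a] at h3
  have key : ‖cross a w‖ ^ 2 ≤ ‖w‖ ^ 2 := by
    rw [esq, esq]
    have e0 : cross a w 0 = a 1 * w 2 - a 2 * w 1 := rfl
    have e1 : cross a w 1 = a 2 * w 0 - a 0 * w 2 := rfl
    have e2 : cross a w 2 = a 0 * w 1 - a 1 * w 0 := rfl
    rw [e0, e1, e2]
    nlinarith [sq_nonneg (a 0 * w 0 + a 1 * w 1 + a 2 * w 2)]
  calc ‖cross a w‖ = Real.sqrt (‖cross a w‖ ^ 2) := (Real.sqrt_sq (norm_nonneg _)).symm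
    _ ≤ Real.sqrt (‖w‖ ^ 2) := Real.sqrt_le_sqrt key
    _ = ‖w‖ := Real.sqrt_sq (norm_nonneg _)

lemma mulVec_coords (α : ℝ) (a b : EuclideanSpace ℝ (Fin 3))
    (x : EuclideanSpace ℝ (Fin 3 ⊕ (Fin 3 ⊕ Fin 3)))
    (u v w : EuclideanSpace ℝ (Fin 3))
    (hu : u = WithLp.toLp 2 (fun i => x (Sum.inl i))) (hv : v = WithLp.toLp 2 (fun i => x (Sum.inr (Sum.inl i))))
    (hw : w = WithLp.toLp 2 (fun i => x (Sum.inr (Sum.inr i)))) :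
    (∀ i, (AMat α a b).mulVec (fun j => x j) (Sum.inl i) = ((-α) • u + cross a w) i)
    ∧ (∀ i, (AMat α a b).mulVec (fun j => x j) (Sum.inr (Sum.inl i)) = ((-α) • v + cross b w) i)
    ∧ (∀ i, (AMat α a b).mulVec (fun j => x j) (Sum.inr (Sum.inr i)) = (cross a u + cross b v) i) := by
  subst hu hv hw
  refine ⟨fun i => ?_, fun i => ?_, fun i => ?_⟩ <;> fin_cases i <;>
    simp [AMat, Matrix.mulVec, dotProduct, Fintype.sum_sum_type, Fin.sum_univ_three,
      Matrix.fromBlocks, Matrix.fromCols, Matrix.fromRows_apply_inl, Matrix.fromRows_apply_inr, Matrix.one_apply, crossMat,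
      cross, Fin.ext_iff, PiLp.add_apply, PiLp.smul_apply, ] <;> ring

lemma final_sqrt {c y z : ℝ} (hc : 0 ≤ c) (hy : 0 ≤ y) (hz : 0 ≤ z)
    (h : y ^ 2 ≤ c * z ^ 2) : y ≤ Real.sqrt c * z := by
  calc y = Real.sqrt (y ^ 2) := (Real.sqrt_sq hy).symm
    _ ≤ Real.sqrt (c * z ^ 2) := Real.sqrt_le_sqrt h
    _ = Real.sqrt c * z := by rw [Real.sqrt_mul hc, Real.sqrt_sq hz]

set_option maxHeartbeats 1000000 in
theorem stmt_3 (α : ℝ) (hα : 0 < α) (a b : EuclideanSpace ℝ (Fin 3))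
    (ha : ‖a‖ = 1) (hb : ‖b‖ = 1) :
    ‖Matrix.toEuclideanCLM (𝕜 := ℝ) (AMat α a b)‖ ≤
      max (Real.sqrt (2 + 2 * α ^ 2)) (Real.sqrt (3 + α ^ 2)) := by
  apply ContinuousLinearMap.opNorm_le_bound _ (le_max_iff.mpr (Or.inl (Real.sqrt_nonneg _)))
  intro x
  set u : EuclideanSpace ℝ (Fin 3) := WithLp.toLp 2 (fun i => x (Sum.inl i)) with hu
  set v : EuclideanSpace ℝ (Fin 3) := WithLp.toLp 2 (fun i => x (Sum.inr (Sum.inl i))) with hv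
  set w : EuclideanSpace ℝ (Fin 3) := WithLp.toLp 2 (fun i => x (Sum.inr (Sum.inr i))) with hw
  have hx : ‖x‖ ^ 2 = ‖u‖ ^ 2 + ‖v‖ ^ 2 + ‖w‖ ^ 2 := by
    rw [esq9, esq, esq, esq]
  have happ : ∀ i, (Matrix.toEuclideanCLM (𝕜 := ℝ) (AMat α a b) x) i
      = (AMat α a b).mulVec (fun j => x j) i := fun i => by
    simpa using congrFun (Matrix.ofLp_toEuclideanCLM (𝕜 := ℝ) (AMat α a b) x) i
  obtain ⟨E1, E2, E3⟩ := mulVec_coords α a b x u v w hu hv hw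
  set y := Matrix.toEuclideanCLM (𝕜 := ℝ) (AMat α a b) x with hy
  have hAx : ‖y‖ ^ 2 = ‖(-α) • u + cross a w‖ ^ 2 + ‖(-α) • v + cross b w‖ ^ 2
      + ‖cross a u + cross b v‖ ^ 2 := by
    rw [esq9, esq, esq, esq]
    simp only [happ, E1, E2, E3]
  have h1 : ‖(-α) • u + cross a w‖ ≤ α * ‖u‖ + ‖w‖ := by
    calc ‖(-α) • u + cross a w‖ ≤ ‖(-α) • u‖ + ‖cross a w‖ := norm_add_le _ _
      _ ≤ α * ‖u‖ + ‖w‖ := by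
          rw [norm_smul]; simp [abs_of_pos hα]; exact cross_norm_le a w ha
  have h2 : ‖(-α) • v + cross b w‖ ≤ α * ‖v‖ + ‖w‖ := by
    calc ‖(-α) • v + cross b w‖ ≤ ‖(-α) • v‖ + ‖cross b w‖ := norm_add_le _ _
      _ ≤ α * ‖v‖ + ‖w‖ := by
          rw [norm_smul]; simp [abs_of_pos hα]; exact cross_norm_le b w hb
  have h3 : ‖cross a u + cross b v‖ ≤ ‖u‖ + ‖v‖ :=
    (norm_add_le _ _).trans (add_le_add (cross_norm_le a u ha) (cross_norm_le b v hb))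
  set p := ‖u‖; set q := ‖v‖; set r := ‖w‖
  have hp : 0 ≤ p := norm_nonneg _
  have hq : 0 ≤ q := norm_nonneg _
  have hr : 0 ≤ r := norm_nonneg _
  have hsum : ‖y‖ ^ 2 ≤ (α * p + r) ^ 2 + (α * q + r) ^ 2 + (p + q) ^ 2 := by
    rw [hAx]
    have n1 := norm_nonneg ((-α) • u + cross a w)
    have n2 := norm_nonneg ((-α) • v + cross b w)
    have n3 := norm_nonneg (cross a u + cross b v)
    nlinarith [h1, h2, h3]
  rcases le_total α 1 with hα1 | hα1
  · have hA2 : α ^ 2 ≤ 1 := by nlinarith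
    have key : ‖y‖ ^ 2 ≤ (3 + α ^ 2) * ‖x‖ ^ 2 := by
      rw [hx]
      nlinarith [sq_nonneg (p - q), sq_nonneg (p - α * r), sq_nonneg (q - α * r),
        mul_nonneg (mul_nonneg (sub_nonneg.mpr hA2) hr) hr]
    calc ‖y‖ ≤ Real.sqrt (3 + α ^ 2) * ‖x‖ :=
          final_sqrt (by positivity) (norm_nonneg y) (norm_nonneg x) key
      _ ≤ _ := mul_le_mul_of_nonneg_right (le_max_right _ _) (norm_nonneg x)
  · have key : ‖y‖ ^ 2 ≤ (2 + 2 * α ^ 2) * ‖x‖ ^ 2 := by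
      rw [hx]
      nlinarith [sq_nonneg (p - q), mul_nonneg (sq_nonneg α) (sq_nonneg (p - r)),
        mul_nonneg (sq_nonneg α) (sq_nonneg (q - r)),
        mul_nonneg (mul_nonneg (mul_nonneg hα.le (sub_nonneg.mpr hα1)) hp) hr,
        mul_nonneg (mul_nonneg (mul_nonneg hα.le (sub_nonneg.mpr hα1)) hq) hr]
    calc ‖y‖ ≤ Real.sqrt (2 + 2 * α ^ 2) * ‖x‖ :=
          final_sqrt (by positivity) (norm_nonneg y) (norm_nonneg x) key
      _ ≤ _ := mul_le_mul_of_nonneg_right (le_max_left _ _) (norm_nonneg x)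
end
end

section
/- Let E(ω) = J^{-1}(Jω × ω) where J = diag(J1,J2,J3), J_i > 0, and J_i ≤ J_j + J_k for all permutations. Then for all ω, ω̂ ∈ R^3 with ω̃ = ω − ω̂ and |ω| ≤ ω_max: |E(ω) − E(ω̂)| ≤ √2 ω_max |ω̃| + |ω̃|². -/
noncomputable section

/-- The Euler operator E(ω) = J⁻¹(Jω × ω) written in coordinates. -/
def eulerE (J1 J2 J3 : ℝ) (ω : EuclideanSpace ℝ (Fin 3)) : EuclideanSpace ℝ (Fin 3) :=
  WithLp.toLp 2 ![(J2 - J3) / J1 * (ω 1 * ω 2), (J3 - J1) / J2 * (ω 2 * ω 0),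
    (J1 - J2) / J3 * (ω 0 * ω 1)]

lemma normsq3 (x : EuclideanSpace ℝ (Fin 3)) : ‖x‖ ^ 2 = x 0 ^ 2 + x 1 ^ 2 + x 2 ^ 2 := by
  rw [EuclideanSpace.norm_eq, Real.sq_sqrt (by positivity)]
  simp [Fin.sum_univ_three, sq_abs]

lemma sq_mul_le {x y : ℝ} (hx : x ^ 2 ≤ 1) : (x * y) ^ 2 ≤ y ^ 2 := by
  nlinarith [sq_nonneg y]

set_option maxHeartbeats 1000000 in
theorem stmt_6 (J1 J2 J3 : ℝ) (h1 : 0 < J1) (h2 : 0 < J2) (h3 : 0 < J3)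
    (t1 : J1 ≤ J2 + J3) (t2 : J2 ≤ J3 + J1) (t3 : J3 ≤ J1 + J2)
    (ωmax : ℝ) (ω ωh : EuclideanSpace ℝ (Fin 3)) (hω : ‖ω‖ ≤ ωmax) :
    ‖eulerE J1 J2 J3 ω - eulerE J1 J2 J3 ωh‖ ≤
      Real.sqrt 2 * ωmax * ‖ω - ωh‖ + ‖ω - ωh‖ ^ 2 := by
  set a := (J2 - J3) / J1 with haa
  set b := (J3 - J1) / J2 with hbb
  set c := (J1 - J2) / J3 with hcc
  have ha : a ^ 2 ≤ 1 := by
    rw [haa, div_pow, div_le_one (by positivity)]; nlinarith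
  have hb : b ^ 2 ≤ 1 := by
    rw [hbb, div_pow, div_le_one (by positivity)]; nlinarith
  have hc : c ^ 2 ≤ 1 := by
    rw [hcc, div_pow, div_le_one (by positivity)]; nlinarith
  set t : EuclideanSpace ℝ (Fin 3) := ω - ωh with htdef
  set v1 : EuclideanSpace ℝ (Fin 3) :=
    WithLp.toLp 2 ![a * (ω 1 * t 2 + t 1 * ω 2),
      b * (ω 2 * t 0 + t 2 * ω 0),
      c * (ω 0 * t 1 + t 0 * ω 1)] with hv1
  set v2 : EuclideanSpace ℝ (Fin 3) :=
    WithLp.toLp 2 ![-(a * (t 1 * t 2)),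
      -(b * (t 2 * t 0)),
      -(c * (t 0 * t 1))] with hv2
  have ht : ∀ i, t i = ω i - ωh i := by
    intro i; rw [htdef]; simp
  have hd : eulerE J1 J2 J3 ω - eulerE J1 J2 J3 ωh = v1 + v2 := by
    ext i
    have hsub : (eulerE J1 J2 J3 ω - eulerE J1 J2 J3 ωh) i
        = eulerE J1 J2 J3 ω i - eulerE J1 J2 J3 ωh i := rfl
    have hadd : (v1 + v2) i = v1 i + v2 i := rfl
    rw [hsub, hadd]
    fin_cases i <;>
      simp [eulerE, hv1, hv2, ht, haa, hbb, hcc] <;> ring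
  have hv1sq : ‖v1‖ ^ 2 = (a * (ω 1 * t 2 + t 1 * ω 2)) ^ 2
      + (b * (ω 2 * t 0 + t 2 * ω 0)) ^ 2 + (c * (ω 0 * t 1 + t 0 * ω 1)) ^ 2 := by
    rw [normsq3]; simp [hv1]
  have hv2sq : ‖v2‖ ^ 2 = (a * (t 1 * t 2)) ^ 2
      + (b * (t 2 * t 0)) ^ 2 + (c * (t 0 * t 1)) ^ 2 := by
    rw [normsq3]; simp [hv2]
  have key1 : ‖v1‖ ≤ Real.sqrt 2 * ‖ω‖ * ‖t‖ := by
    have hR : 0 ≤ Real.sqrt 2 * ‖ω‖ * ‖t‖ := by positivity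
    refine le_of_pow_le_pow_left₀ two_ne_zero hR ?_
    have hsq : (Real.sqrt 2 * ‖ω‖ * ‖t‖) ^ 2 = 2 * ‖ω‖ ^ 2 * ‖t‖ ^ 2 := by
      rw [mul_pow, mul_pow, Real.sq_sqrt (by norm_num)]
    rw [hsq, hv1sq, normsq3 ω, normsq3 t]
    have e1 := sq_mul_le (y := ω 1 * t 2 + t 1 * ω 2) ha
    have e2 := sq_mul_le (y := ω 2 * t 0 + t 2 * ω 0) hb
    have e3 := sq_mul_le (y := ω 0 * t 1 + t 0 * ω 1) hc
    clear hd hv1sq hv2sq hv1 hv2 ht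
    nlinarith [sq_nonneg (ω 0 * t 1 - ω 1 * t 0), sq_nonneg (ω 1 * t 2 - ω 2 * t 1),
      sq_nonneg (ω 0 * t 2 - ω 2 * t 0), sq_nonneg (ω 0 * t 0), sq_nonneg (ω 1 * t 1),
      sq_nonneg (ω 2 * t 2)]
  have key2 : ‖v2‖ ≤ ‖t‖ ^ 2 := by
    have hR : 0 ≤ ‖t‖ ^ 2 := by positivity
    refine le_of_pow_le_pow_left₀ two_ne_zero hR ?_
    rw [hv2sq, normsq3 t]
    have e1 := sq_mul_le (y := t 1 * t 2) ha
    have e2 := sq_mul_le (y := t 2 * t 0) hb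
    have e3 := sq_mul_le (y := t 0 * t 1) hc
    clear hd hv1sq hv2sq key1 hv1 hv2 ht
    nlinarith [sq_nonneg (t 0 ^ 2), sq_nonneg (t 1 ^ 2), sq_nonneg (t 2 ^ 2),
      sq_nonneg (t 0 * t 1), sq_nonneg (t 1 * t 2), sq_nonneg (t 2 * t 0)]
  calc ‖eulerE J1 J2 J3 ω - eulerE J1 J2 J3 ωh‖ = ‖v1 + v2‖ := by rw [hd]
    _ ≤ ‖v1‖ + ‖v2‖ := norm_add_le _ _
    _ ≤ Real.sqrt 2 * ‖ω‖ * ‖t‖ + ‖t‖ ^ 2 := add_le_add key1 key2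
    _ ≤ Real.sqrt 2 * ωmax * ‖t‖ + ‖t‖ ^ 2 := by
        have := mul_le_mul_of_nonneg_right
          (mul_le_mul_of_nonneg_left hω (Real.sqrt_nonneg 2)) (norm_nonneg t)
        linarith
end
end
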